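/- Let A = (a_{ij}) be an n×n multiparameter quantum matrix over R with the (p,λ)-condition, and let x_1,…,x_n ∈ R satisfy the q-exterior relations, with every a_{ij} commuting with every x_k. Set δ_i = Σ_{j=1}^n a_{ij} x_j. Then for any row indices i_1,…,i_t (not necessarily distinct or ordered), δ_{i_1} δ_{i_2} ⋯ δ_{i_t} = Σ_{1 ≤ j_1 < j_2 < ⋯ < j_t ≤ n} det_q(A^{i_1…i_t}_{j_1…j_t}) · x_{j_1} x_{j_2} ⋯ x_{j_t}. -/

import Mathlib

open Finset

noncomputable section

attribute [local instance] Classical.propDecidable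

/-- Ordered product `f 0 * f 1 * ... * f (n-1)` of noncommuting elements. -/
def ordProd {R : Type*} [Monoid R] {n : ℕ} (f : Fin n → R) : R :=
  (List.ofFn f).prod

/-- The generalized sign `(−q)_σ` with column labels `cols`:
`(−1)^{ℓ(σ)} ∏_{k<k', σ(k)>σ(k')} q_{cols(σ(k')) cols(σ(k))}`. -/
def qSign {N t : ℕ} (q : Fin N → Fin N → ℂ) (cols : Fin t → Fin N)
    (σ : Equiv.Perm (Fin t)) : ℂ :=
  ∏ ij ∈ Finset.univ.filter
      (fun ij : Fin t × Fin t => ij.1 < ij.2 ∧ σ ij.2 < σ ij.1),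
    (-(q (cols (σ ij.2)) (cols (σ ij.1))))

/-- The quantum minor `det_q(A^{rows}_{cols})`. -/
def qMinor {R : Type*} [Ring R] [Algebra ℂ R] {N t : ℕ}
    (q : Fin N → Fin N → ℂ) (rows cols : Fin t → Fin N)
    (a : Fin N → Fin N → R) : R :=
  ∑ σ : Equiv.Perm (Fin t),
    qSign q cols σ • ordProd (fun k => a (rows k) (cols (σ k)))

/-- Quantum row determinant `rdet(A) = Σ_σ (−q)_σ a_{1σ(1)} ⋯ a_{nσ(n)}`. -/
def rdet {R : Type*} [Ring R] [Algebra ℂ R] {N : ℕ}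
    (q : Fin N → Fin N → ℂ) (a : Fin N → Fin N → R) : R :=
  ∑ σ : Equiv.Perm (Fin N),
    qSign q id σ • ordProd (fun i => a i (σ i))

/-- Quantum column determinant `cdet(A) = Σ_σ (−p)_σ a_{σ(1)1} ⋯ a_{σ(n)n}`. -/
def cdet {R : Type*} [Ring R] [Algebra ℂ R] {N : ℕ}
    (p : Fin N → Fin N → ℂ) (a : Fin N → Fin N → R) : R :=
  ∑ σ : Equiv.Perm (Fin N),
    qSign p id σ • ordProd (fun i => a (σ i) i)

/-- Conditions on the parameters: they are nonzero, `p_{ii} = q_{ii} = 1`,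
and `p_{ij}p_{ji} = q_{ij}q_{ji} = 1`. -/
def ParamConds {N : ℕ} (p q : Fin N → Fin N → ℂ) : Prop :=
  (∀ i j, p i j ≠ 0 ∧ q i j ≠ 0) ∧
  (∀ i, p i i = 1 ∧ q i i = 1) ∧
  (∀ i j, p i j * p j i = 1 ∧ q i j * q j i = 1)

/-- The `(p,λ)`-condition: `p_{ij} q_{ij} = λ` for `i < j`. -/
def PLambdaCond {N : ℕ} (p q : Fin N → Fin N → ℂ) (lam : ℂ) : Prop :=
  ∀ i j : Fin N, i < j → p i j * q i j = lam

/-- `A = (a_{ij})` is a multiparameter quantum matrix for the parameters `p, q`. -/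
def IsQuantumMatrix {R : Type*} [Ring R] [Algebra ℂ R] {N : ℕ}
    (p q : Fin N → Fin N → ℂ) (a : Fin N → Fin N → R) : Prop :=
  (∀ i k l : Fin N, k < l → a i k * a i l = q k l • (a i l * a i k)) ∧
  (∀ i j k : Fin N, i < j → a i k * a j k = p i j • (a j k * a i k)) ∧
  (∀ i j k l : Fin N, i < j → k < l →
    a i k * a j l - (q k l / q i j) • (a j l * a i k)
      = q k l • (a i l * a j k) - (q i j)⁻¹ • (a j k * a i l)) ∧
  (∀ i j k l : Fin N, i < j → k < l →
    a i k * a j l - (p i j / p k l) • (a j l * a i k)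
      = p i j • (a j k * a i l) - (p k l)⁻¹ • (a i l * a j k))

/-- `x_1, …, x_n` satisfy the `q`-exterior relations. -/
def QExterior {R : Type*} [Ring R] [Algebra ℂ R] {N : ℕ}
    (q : Fin N → Fin N → ℂ) (x : Fin N → R) : Prop :=
  (∀ i, x i * x i = 0) ∧
  (∀ i j : Fin N, i < j → x j * x i = -(q i j) • (x i * x j))

/-- The quantum integer `[k]_λ = 1 + λ + ⋯ + λ^{k−1}`. -/
def qNum (lam : ℂ) (k : ℕ) : ℂ := ∑ i ∈ Finset.range k, lam ^ i

/-- The quantum factorial `[n]_λ! = [1]_λ [2]_λ ⋯ [n]_λ`. -/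
def qFact (lam : ℂ) (n : ℕ) : ℂ := ∏ k ∈ Finset.range n, qNum lam (k + 1)

/-- The index `2i−1` (1-based), i.e. position `2i` (0-based), inside `Fin (2n)`. -/
def pfIdx1 {n : ℕ} (i : Fin n) : Fin (2 * n) :=
  ⟨2 * i.1, by have := i.isLt; omega⟩

/-- The index `2i` (1-based), i.e. position `2i+1` (0-based), inside `Fin (2n)`. -/
def pfIdx2 {n : ℕ} (i : Fin n) : Fin (2 * n) :=
  ⟨2 * i.1 + 1, by have := i.isLt; omega⟩

/-- The multiparameter quantum Pfaffian
`Pf_q(B) = Σ_σ (−q)_σ b_{σ(1)σ(2)} ⋯ b_{σ(2n−1)σ(2n)}`, the sum over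
permutations `σ` of `{1,…,2n}` with `σ(2i−1) < σ(2i)` for all `i`. -/
def Pf {R : Type*} [Ring R] [Algebra ℂ R] {n : ℕ}
    (q : Fin (2 * n) → Fin (2 * n) → ℂ) (b : Fin (2 * n) → Fin (2 * n) → R) : R :=
  ∑ σ ∈ Finset.univ.filter
      (fun σ : Equiv.Perm (Fin (2 * n)) => ∀ i : Fin n, σ (pfIdx1 i) < σ (pfIdx2 i)),
    qSign q id σ • ordProd (fun i : Fin n => b (σ (pfIdx1 i)) (σ (pfIdx2 i)))

/-- Sub-Pfaffian along an index map `f` (typically the increasing enumeration of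
a subset of the indices): the parameters and the entries are restricted along `f`. -/
def PfOn {R : Type*} [Ring R] [Algebra ℂ R] {N m : ℕ}
    (q : Fin N → Fin N → ℂ) (b : Fin N → Fin N → R) (f : Fin (2 * m) → Fin N) : R :=
  Pf (fun i j => q (f i) (f j)) (fun i j => b (f i) (f j))

/-- `inv(I, J) = ∏_{i ∈ I, j ∈ J, i > j} (−q_{ji})`. -/
def invQ {N : ℕ} (q : Fin N → Fin N → ℂ) (I J : Finset (Fin N)) : ℂ :=
  ∏ i ∈ I, ∏ j ∈ J, if j < i then -(q j i) else 1

/-- The position `k·m + r` within `Fin (m·n)`, i.e. the `r`-th index of the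
`k`-th block of size `m`. -/
def blockIdx {m n : ℕ} (k : Fin n) (r : Fin m) : Fin (m * n) :=
  ⟨k.1 * m + r.1, by
    have hk : k.1 + 1 ≤ n := k.isLt
    have hr : r.1 < m := r.isLt
    calc k.1 * m + r.1 < k.1 * m + m := Nat.add_lt_add_left hr _
      _ = (k.1 + 1) * m := (Nat.succ_mul k.1 m).symm
      _ ≤ n * m := Nat.mul_le_mul hk (Nat.le_refl m)
      _ = m * n := Nat.mul_comm n m⟩

/-- The multiparameter quantum hyper-Pfaffian
`Pf_q(B) = Σ_{σ∈Π} (−q)_σ b_{σ(1)…σ(m)} ⋯ b_{σ(m(n−1)+1)…σ(mn)}`, where `Π` is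
the set of permutations of `{1,…,mn}` increasing on each consecutive block of
length `m`. -/
def hPf {R : Type*} [Ring R] [Algebra ℂ R] {m n : ℕ}
    (q : Fin (m * n) → Fin (m * n) → ℂ) (b : (Fin m → Fin (m * n)) → R) : R :=
  ∑ σ ∈ Finset.univ.filter
      (fun σ : Equiv.Perm (Fin (m * n)) =>
        ∀ k : Fin n, StrictMono (fun r : Fin m => σ (blockIdx k r))),
    qSign q id σ • ordProd (fun k : Fin n => b (fun r => σ (blockIdx k r)))

/-- The increasing enumeration of `{1,…,n} \ {k}` (the "hat" of `k`). -/
def hatIdx {n : ℕ} (k : Fin n) (r : Fin (n - 1)) : Fin n :=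
  if h : r.1 < k.1 then ⟨r.1, by have := k.isLt; omega⟩
  else ⟨r.1 + 1, by have := r.isLt; omega⟩

/-- The increasing enumeration of `{s+1,…,n}`. -/
def tailIdx {n : ℕ} (s : ℕ) (k : Fin (n - s)) : Fin n :=
  ⟨s + k.1, by have := k.isLt; omega⟩

/-- The increasing enumeration of `{1,…,t}` inside `{1,…,n}`. -/
def headIdx {n : ℕ} (t : ℕ) (ht : t ≤ n) (k : Fin t) : Fin n :=
  ⟨k.1, lt_of_lt_of_le k.isLt ht⟩

/-- `σ` is a `t`-shuffle: `σ(1) < ⋯ < σ(t)` and `σ(t+1) < ⋯ < σ(n)`. -/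
def IsShuffle {n : ℕ} (t : ℕ) (σ : Equiv.Perm (Fin n)) : Prop :=
  (∀ k l : Fin n, k < l → l.1 < t → σ k < σ l) ∧
  (∀ k l : Fin n, k < l → t ≤ k.1 → σ k < σ l)

set_option linter.unusedSectionVars false
set_option linter.deprecated false

section Aux
variable {R : Type*} [Ring R] [Algebra ℂ R]

lemma ordProd_zero (f : Fin 0 → R) : ordProd f = 1 := by simp [ordProd]

lemma ordProd_succ {t : ℕ} (f : Fin (t+1) → R) :
    ordProd f = f 0 * ordProd (fun i => f i.succ) := by
  simp [ordProd, List.ofFn_succ]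

/-- splitting at positions k, k+1 -/
lemma ordProd_split {t : ℕ} (f : Fin t → R) (k : ℕ) (hk : k + 1 < t) :
    ordProd f = ((List.ofFn f).take k).prod *
      ((f ⟨k, by omega⟩ * f ⟨k+1, hk⟩) * ((List.ofFn f).drop (k+2)).prod) := by
  conv_lhs => rw [ordProd, ← List.take_append_drop k (List.ofFn f), List.prod_append]
  congr 1
  have hlen : k + 1 < (List.ofFn f).length := by simp; omega
  rw [List.drop_eq_getElem_cons (by simp; omega),
    show (List.ofFn f).drop (k+1) = (List.ofFn f)[k+1]'hlen :: (List.ofFn f).drop (k+2) from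
      List.drop_eq_getElem_cons hlen]
  simp [List.getElem_ofFn, mul_assoc]

lemma ofFn_comp_swap_take {t : ℕ} (f : Fin t → R) (k : ℕ) (hk : k + 1 < t) :
    (List.ofFn (f ∘ Equiv.swap (⟨k, by omega⟩ : Fin t) ⟨k+1, hk⟩)).take k
      = (List.ofFn f).take k := by
  apply List.ext_getElem (by simp)
  intro i h1 h2
  have hi : i < k := by simp at h1; omega
  have hit : i < t := by omega
  rw [List.getElem_take, List.getElem_take, List.getElem_ofFn, List.getElem_ofFn]
  simp only [Function.comp_apply]
  rw [Equiv.swap_apply_of_ne_of_ne (by simp [Fin.ext_iff]; omega) (by simp [Fin.ext_iff]; omega)]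

lemma ofFn_comp_swap_drop {t : ℕ} (f : Fin t → R) (k : ℕ) (hk : k + 1 < t) :
    (List.ofFn (f ∘ Equiv.swap (⟨k, by omega⟩ : Fin t) ⟨k+1, hk⟩)).drop (k+2)
      = (List.ofFn f).drop (k+2) := by
  apply List.ext_getElem (by simp)
  intro i h1 h2
  have hit : k + 2 + i < t := by simp at h1; omega
  rw [List.getElem_drop, List.getElem_drop, List.getElem_ofFn, List.getElem_ofFn]
  simp only [Function.comp_apply]
  rw [Equiv.swap_apply_of_ne_of_ne (by simp [Fin.ext_iff]; omega) (by simp [Fin.ext_iff]; omega)]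

lemma ordProd_swap {t : ℕ} (f : Fin t → R) (k : ℕ) (hk : k + 1 < t) (c : ℂ)
    (h : f ⟨k, by omega⟩ * f ⟨k+1, hk⟩ = c • (f ⟨k+1, hk⟩ * f ⟨k, by omega⟩)) :
    ordProd f = c • ordProd (f ∘ Equiv.swap (⟨k, by omega⟩ : Fin t) ⟨k+1, hk⟩) := by
  rw [ordProd_split f k hk, ordProd_split (f ∘ Equiv.swap (⟨k, by omega⟩ : Fin t) ⟨k+1, hk⟩) k hk,
    ofFn_comp_swap_take, ofFn_comp_swap_drop]
  simp only [Function.comp_apply, Equiv.swap_apply_left, Equiv.swap_apply_right]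
  rw [h, smul_mul_assoc, mul_smul_comm]

lemma ordProd_adj_zero {t : ℕ} (f : Fin t → R) (k : ℕ) (hk : k + 1 < t)
    (h : f ⟨k, by omega⟩ * f ⟨k+1, hk⟩ = 0) : ordProd f = 0 := by
  rw [ordProd_split f k hk, h, zero_mul, mul_zero]

end Aux

section XLemmas
variable {R : Type*} [Ring R] [Algebra ℂ R] {n : ℕ} (q : Fin n → Fin n → ℂ) (x : Fin n → R)

variable (hx1 : ∀ i, x i * x i = 0)
variable (hx2 : ∀ i j : Fin n, i < j → x j * x i = -(q i j) • (x i * x j))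
variable (hq0 : ∀ i j, q i j ≠ 0)

include hx1 hx2 hq0 in
lemma xprod_pair_zero {t : ℕ} : ∀ (d : ℕ) (f : Fin t → Fin n) (k k' : Fin t),
    k < k' → k'.1 - k.1 = d → f k = f k' → ordProd (x ∘ f) = 0 := by
  intro d
  induction d using Nat.strong_induction_on with
  | _ d IH =>
  intro f k k' hkk' hd hf
  have hlt : k.1 < k'.1 := hkk'
  have hk't : k'.1 < t := k'.isLt
  rcases Nat.lt_or_ge 1 d with hd2 | hd1
  · -- d ≥ 2 : compare f k and f ⟨k.1+1⟩
    have hk1t : k.1 + 1 < t := by omega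
    set k1 : Fin t := ⟨k.1 + 1, hk1t⟩ with hk1
    rcases lt_trichotomy (f k) (f k1) with hlt1 | heq1 | hgt1
    · -- ascent: swap with inverse coefficient
      have hrel := hx2 (f k) (f k1) hlt1
      set c : ℂ := -(q (f k) (f k1)) with hc
      have hc0 : c ≠ 0 := by simpa [hc] using hq0 (f k) (f k1)
      have hrel' : (x ∘ f) ⟨k.1, by omega⟩ * (x ∘ f) ⟨k.1+1, hk1t⟩
          = c⁻¹ • ((x ∘ f) ⟨k.1+1, hk1t⟩ * (x ∘ f) ⟨k.1, by omega⟩) := by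
        simp only [Function.comp_apply]
        rw [show (⟨k.1, by omega⟩ : Fin t) = k from rfl]
        rw [hrel, smul_smul, inv_mul_cancel₀ hc0, one_smul]
      rw [ordProd_swap (x ∘ f) k.1 hk1t c⁻¹ hrel']
      have : (x ∘ f) ∘ (Equiv.swap (⟨k.1, by omega⟩ : Fin t) ⟨k.1+1, hk1t⟩)
          = x ∘ (f ∘ (Equiv.swap (⟨k.1, by omega⟩ : Fin t) ⟨k.1+1, hk1t⟩)) := rfl
      rw [this, IH (d-1) (by omega) _ ⟨k.1+1, hk1t⟩ k' (by simp [Fin.lt_def]; omega)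
        (by simp; omega) ?_, smul_zero]
      · simp only [Function.comp_apply]
        rw [Equiv.swap_apply_right, Equiv.swap_apply_of_ne_of_ne
          (by simp [Fin.ext_iff]; omega) (by simp [Fin.ext_iff]; omega)]
        rw [show (⟨k.1, by omega⟩ : Fin t) = k from rfl, hf]
    · exact IH 1 (by omega) f k k1 (Fin.lt_def.2 (by show k.1 < k.1 + 1; omega)) (by show k.1 + 1 - k.1 = 1; omega) heq1
    · -- descent
      have hrel := hx2 (f k1) (f k) hgt1
      set c : ℂ := -(q (f k1) (f k)) with hc
      have hrel' : (x ∘ f) ⟨k.1, by omega⟩ * (x ∘ f) ⟨k.1+1, hk1t⟩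
          = c • ((x ∘ f) ⟨k.1+1, hk1t⟩ * (x ∘ f) ⟨k.1, by omega⟩) := by
        simp only [Function.comp_apply]
        rw [show (⟨k.1, by omega⟩ : Fin t) = k from rfl]
        exact hrel
      rw [ordProd_swap (x ∘ f) k.1 hk1t c hrel']
      have : (x ∘ f) ∘ (Equiv.swap (⟨k.1, by omega⟩ : Fin t) ⟨k.1+1, hk1t⟩)
          = x ∘ (f ∘ (Equiv.swap (⟨k.1, by omega⟩ : Fin t) ⟨k.1+1, hk1t⟩)) := rfl
      rw [this, IH (d-1) (by omega) _ ⟨k.1+1, hk1t⟩ k' (by simp [Fin.lt_def]; omega)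
        (by simp; omega) ?_, smul_zero]
      simp only [Function.comp_apply]
      rw [Equiv.swap_apply_right, Equiv.swap_apply_of_ne_of_ne
        (by simp [Fin.ext_iff]; omega) (by simp [Fin.ext_iff]; omega)]
      rw [show (⟨k.1, by omega⟩ : Fin t) = k from rfl, hf]
  · -- d = 1 (d = 0 impossible)
    have hd1' : d = 1 := by omega
    have hadj : k'.1 = k.1 + 1 := by omega
    apply ordProd_adj_zero (x ∘ f) k.1 (by omega)
    simp only [Function.comp_apply]
    rw [show (⟨k.1, by omega⟩ : Fin t) = k from rfl,
      show (⟨k.1+1, by omega⟩ : Fin t) = k' from (by simp [Fin.ext_iff]; omega), ← hf]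
    exact hx1 (f k)

include hx1 hx2 hq0 in
lemma xprod_eq_zero {t : ℕ} (f : Fin t → Fin n) (hf : ¬ Function.Injective f) :
    ordProd (x ∘ f) = 0 := by
  simp only [Function.Injective, not_forall] at hf
  obtain ⟨a, b, hab, hne⟩ := hf
  rcases lt_or_gt_of_ne hne with h | h
  · exact xprod_pair_zero q x hx1 hx2 hq0 _ f a b h rfl hab
  · exact xprod_pair_zero q x hx1 hx2 hq0 _ f b a h rfl hab.symm

end XLemmas

def invSet {t : ℕ} (σ : Equiv.Perm (Fin t)) : Finset (Fin t × Fin t) :=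
  Finset.univ.filter (fun ij : Fin t × Fin t => ij.1 < ij.2 ∧ σ ij.2 < σ ij.1)

lemma qSign_eq {N t : ℕ} (q : Fin N → Fin N → ℂ) (cols : Fin t → Fin N)
    (σ : Equiv.Perm (Fin t)) :
    qSign q cols σ = ∏ ij ∈ invSet σ, (-(q (cols (σ ij.2)) (cols (σ ij.1)))) := rfl

lemma swap_noflip {t : ℕ} (k : ℕ) (hk : k + 1 < t) {i j : Fin t} (hij : i < j)
    (hne : ¬(i = ⟨k, by omega⟩ ∧ j = ⟨k+1, hk⟩)) :
    Equiv.swap (⟨k, by omega⟩ : Fin t) ⟨k+1, hk⟩ i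
      < Equiv.swap (⟨k, by omega⟩ : Fin t) ⟨k+1, hk⟩ j := by
  rw [Equiv.swap_apply_def, Equiv.swap_apply_def]
  split_ifs <;>
    simp only [Fin.lt_def, Fin.ext_iff, not_and, Fin.val_mk] at * <;>
    omega

lemma qSign_swap {N t : ℕ} (q : Fin N → Fin N → ℂ) (col : Fin t → Fin N)
    (σ : Equiv.Perm (Fin t)) (k : ℕ) (hk : k + 1 < t)
    (hd : σ ⟨k+1, hk⟩ < σ ⟨k, by omega⟩) :
    qSign q col σ = -(q (col (σ ⟨k+1, hk⟩)) (col (σ ⟨k, by omega⟩)))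
      * qSign q col (σ * Equiv.swap ⟨k, by omega⟩ ⟨k+1, hk⟩)
    ∧ (invSet (σ * Equiv.swap (⟨k, by omega⟩ : Fin t) ⟨k+1, hk⟩)).card + 1
        = (invSet σ).card := by
  set kk : Fin t := ⟨k, by omega⟩ with hkk
  set k1 : Fin t := ⟨k+1, hk⟩ with hk1
  set τ := Equiv.swap kk k1 with hτ
  set σ' := σ * τ with hσ'
  set F : Fin t × Fin t → Fin t × Fin t := fun p => (τ p.1, τ p.2) with hF
  have hFinj : Function.Injective F := by
    intro p r h
    simp only [hF, Prod.mk.injEq] at h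
    exact Prod.ext (τ.injective h.1) (τ.injective h.2)
  have hσ'app : ∀ i, σ' i = σ (τ i) := fun i => rfl
  have hττ : ∀ i, τ (τ i) = i := fun i => Equiv.swap_apply_self _ _ i
  have hne_pair : ∀ r : Fin t × Fin t, r ∈ invSet σ' → r ≠ (kk, k1) := by
    rintro r hr rfl
    simp only [invSet, mem_filter] at hr
    have h2 := hr.2.2
    rw [hσ'app, hσ'app, Equiv.swap_apply_left, Equiv.swap_apply_right] at h2
    exact absurd hd (asymm h2)
  have hset : invSet σ = insert (kk, k1) ((invSet σ').image F) := by
    ext p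
    simp only [invSet, mem_filter, mem_univ, true_and, mem_insert, mem_image]
    constructor
    · rintro ⟨h12, hinv⟩
      by_cases hp : p = (kk, k1)
      · exact Or.inl hp
      · refine Or.inr ⟨(τ p.1, τ p.2), ⟨⟨?_, ?_⟩, ?_⟩⟩
        · exact swap_noflip k hk h12 (fun ⟨h1, h2⟩ => hp (Prod.ext h1 h2))
        · rw [hσ'app, hσ'app, hττ, hττ]; exact hinv
        · simp only [hF, hττ]
    · rintro (rfl | ⟨r, ⟨⟨hr12, hrinv⟩, rfl⟩⟩)
      · exact ⟨by simp [hkk, hk1, Fin.lt_def], hd⟩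
      · have hrne : r ≠ (kk, k1) := hne_pair r (by simp [invSet, hr12, hrinv])
        refine ⟨swap_noflip k hk hr12 (fun ⟨h1, h2⟩ => hrne (Prod.ext h1 h2)), ?_⟩
        rw [hσ'app, hσ'app] at hrinv
        exact hrinv
  have hnot : (kk, k1) ∉ (invSet σ').image F := by
    intro hmem
    obtain ⟨r, hr, hFr⟩ := mem_image.1 hmem
    have h1 : r.1 = k1 := by
      have := congrArg (fun z : Fin t × Fin t => τ z.1) hFr
      simpa [hF, hττ, hτ, Equiv.swap_apply_left] using this
    have h2 : r.2 = kk := by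
      have := congrArg (fun z : Fin t × Fin t => τ z.2) hFr
      simpa [hF, hττ, hτ, Equiv.swap_apply_right] using this
    simp only [invSet, mem_filter] at hr
    have := hr.2.1
    rw [h1, h2] at this
    simp [hkk, hk1, Fin.lt_def] at this
  constructor
  · rw [qSign_eq, qSign_eq, hset, prod_insert hnot,
      prod_image (fun a _ b _ h => hFinj h)]
    congr 1
  · rw [hset, card_insert_of_notMem hnot,
      card_image_of_injective _ hFinj]

section Perm
variable {R : Type*} [Ring R] [Algebra ℂ R] {n : ℕ} (q : Fin n → Fin n → ℂ) (x : Fin n → R)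
variable (hx2 : ∀ i j : Fin n, i < j → x j * x i = -(q i j) • (x i * x j))

include hx2 in
lemma xprod_perm_aux {t : ℕ} (col : Fin t → Fin n) (hcol : StrictMono col) :
    ∀ N (σ : Equiv.Perm (Fin t)), (invSet σ).card = N →
    ordProd (x ∘ col ∘ σ) = qSign q col σ • ordProd (x ∘ col) := by
  intro N
  induction N using Nat.strong_induction_on with
  | _ N IH =>
  intro σ hN
  by_cases hasc : ∀ m (h : m + 1 < t), σ ⟨m, by omega⟩ < σ ⟨m+1, h⟩
  · -- σ is the identity
    have hmono : StrictMono ⇑σ := by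
      have step : ∀ d : ℕ, ∀ i j : Fin t, j.1 = i.1 + (d + 1) → σ i < σ j := by
        intro d
        induction d with
        | zero =>
          intro i j hij
          have h1 : i.1 + 1 < t := by have := j.isLt; omega
          have h := hasc i.1 h1
          have hi : (⟨i.1, by omega⟩ : Fin t) = i := rfl
          have hj : (⟨i.1 + 1, h1⟩ : Fin t) = j := by simp [Fin.ext_iff]; omega
          rwa [hi, hj] at h
        | succ d ihd =>
          intro i j hij
          have h1 : i.1 + (d + 1) < t := by have := j.isLt; omega
          have ha := ihd i ⟨i.1 + (d + 1), h1⟩ rfl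
          have hb := hasc (i.1 + (d + 1)) (by have := j.isLt; omega)
          have hj : (⟨i.1 + (d + 1) + 1, by have := j.isLt; omega⟩ : Fin t) = j := by
            simp [Fin.ext_iff]; omega
          rw [hj] at hb
          exact ha.trans hb
      intro i j hij
      exact step (j.1 - i.1 - 1) i j (by have := (Fin.lt_def).1 hij; omega)
    have hid : ⇑σ = id := by
      refine (hmono.range_inj (strictMono_id : StrictMono (id : Fin t → Fin t))).1 ?_
      rw [Set.range_id]
      exact Set.range_eq_univ.mpr σ.surjective
    have hempty : invSet σ = ∅ := by
      rw [Finset.eq_empty_iff_forall_notMem]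
      intro p hp
      simp only [invSet, mem_filter] at hp
      exact absurd (hmono hp.2.1) (asymm hp.2.2)
    have hq1 : qSign q col σ = 1 := by rw [qSign_eq, hempty, prod_empty]
    rw [hq1, one_smul]
    congr 1
    funext i
    simp [hid]
  · push_neg at hasc
    obtain ⟨m, hm, hge⟩ := hasc
    set kk : Fin t := ⟨m, by omega⟩ with hkk
    set k1 : Fin t := ⟨m+1, hm⟩ with hk1
    have hd : σ k1 < σ kk := by
      rcases lt_or_eq_of_le hge with h | h
      · exact h
      · exfalso
        have := σ.injective h
        simp [hkk, hk1, Fin.ext_iff] at this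
    obtain ⟨hqs, hcard⟩ := qSign_swap q col σ m hm hd
    set σ' := σ * Equiv.swap kk k1 with hσ'
    have hNpos : (kk, k1) ∈ invSet σ := by
      simp only [invSet, mem_filter, mem_univ, true_and]
      exact ⟨by simp [hkk, hk1, Fin.lt_def], hd⟩
    have hcard' : (invSet σ').card < N := by
      rw [← hN, ← hcard]; omega
    have hrel : (x ∘ col ∘ ⇑σ) ⟨m, by omega⟩ * (x ∘ col ∘ ⇑σ) ⟨m+1, hm⟩
        = (-(q (col (σ k1)) (col (σ kk)))) •
          ((x ∘ col ∘ ⇑σ) ⟨m+1, hm⟩ * (x ∘ col ∘ ⇑σ) ⟨m, by omega⟩) :=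
      hx2 (col (σ k1)) (col (σ kk)) (hcol hd)
    rw [ordProd_swap _ m hm _ hrel]
    have hcomp : (x ∘ col ∘ ⇑σ) ∘ ⇑(Equiv.swap kk k1) = x ∘ col ∘ ⇑σ' := by
      funext i
      simp [hσ', Equiv.Perm.mul_apply]
    rw [hcomp, IH _ hcard' σ' rfl, smul_smul, hqs]

include hx2 in
lemma xprod_perm {t : ℕ} (col : Fin t → Fin n) (hcol : StrictMono col)
    (σ : Equiv.Perm (Fin t)) :
    ordProd (x ∘ col ∘ σ) = qSign q col σ • ordProd (x ∘ col) :=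
  xprod_perm_aux q x hx2 col hcol _ σ rfl

end Perm

section Expand
variable {R : Type*} [Ring R] [Algebra ℂ R] {n : ℕ}

lemma ordProd_sum : ∀ {t : ℕ} (F : Fin t → Fin n → R),
    ordProd (fun k => ∑ j, F k j) = ∑ g : Fin t → Fin n, ordProd (fun k => F k (g k)) := by
  intro t
  induction t with
  | zero =>
    intro F
    rw [ordProd_zero]
    rw [Fintype.sum_eq_single (fun k : Fin 0 => k.elim0) (fun g hg => absurd (funext fun k => k.elim0) hg)]
    rw [ordProd_zero]
  | succ t IH =>
    intro F
    rw [ordProd_succ]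
    have hIH := IH (fun i j => F i.succ j)
    rw [show (fun i : Fin t => (fun k : Fin (t+1) => ∑ j, F k j) i.succ)
        = fun i : Fin t => ∑ j, F i.succ j from rfl, hIH, Finset.sum_mul_sum]
    rw [← (Fin.consEquiv (fun _ : Fin (t+1) => Fin n)).sum_comp
      (fun g : Fin (t+1) → Fin n => ordProd (fun k => F k (g k)))]
    rw [Fintype.sum_prod_type]
    apply Finset.sum_congr rfl
    intro j _
    apply Finset.sum_congr rfl
    intro g' _
    conv_rhs => rw [ordProd_succ]
    simp [Fin.consEquiv]

lemma ordProd_mul_split : ∀ {t : ℕ} (A X : Fin t → R),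
    (∀ k l, Commute (X k) (A l)) →
    ordProd (fun k => A k * X k) = ordProd A * ordProd X := by
  intro t
  induction t with
  | zero => intro A X _; rw [ordProd_zero, ordProd_zero, ordProd_zero, one_mul]
  | succ t IH =>
    intro A X hc
    rw [ordProd_succ, ordProd_succ A, ordProd_succ X,
      IH (fun i => A i.succ) (fun i => X i.succ) (fun k l => hc k.succ l.succ)]
    have hcomm : Commute (X 0) (ordProd (fun i => A i.succ)) := by
      apply Commute.list_prod_right
      intro y hy
      obtain ⟨i, hi⟩ := List.mem_ofFn.1 hy
      rw [← hi]
      exact hc 0 i.succ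
    calc A 0 * X 0 * (ordProd (fun i => A i.succ) * ordProd (fun i => X i.succ))
        = A 0 * (X 0 * ordProd (fun i => A i.succ)) * ordProd (fun i => X i.succ) := by
          rw [mul_assoc, mul_assoc, mul_assoc]
      _ = A 0 * (ordProd (fun i => A i.succ) * X 0) * ordProd (fun i => X i.succ) := by
          rw [hcomm.eq]
      _ = A 0 * ordProd (fun i => A i.succ) * (X 0 * ordProd (fun i => X i.succ)) := by
          rw [mul_assoc, mul_assoc, mul_assoc]

end Expand

lemma injective_factor {n t : ℕ} (g : Fin t → Fin n) (hg : Function.Injective g) :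
    ∃ (c : Fin t → Fin n) (σ : Equiv.Perm (Fin t)), StrictMono c ∧ c ∘ ⇑σ = g := by
  have hcard : (Finset.univ.image g).card = t := by
    rw [Finset.card_image_of_injective _ hg, Finset.card_univ, Fintype.card_fin]
  set s := Finset.univ.image g with hs
  set c : Fin t → Fin n := ⇑(s.orderEmbOfFin hcard) with hc
  have hmem : ∀ k, g k ∈ s := fun k => Finset.mem_image.2 ⟨k, Finset.mem_univ k, rfl⟩
  set e : Fin t → Fin t := fun k => (s.orderIsoOfFin hcard).symm ⟨g k, hmem k⟩ with he
  have heinj : Function.Injective e := by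
    intro u v h
    simp only [he] at h
    have h2 := (s.orderIsoOfFin hcard).symm.injective h
    exact hg (congrArg Subtype.val h2)
  refine ⟨c, Equiv.ofBijective e (Finite.injective_iff_bijective.1 heinj),
    (s.orderEmbOfFin hcard).strictMono, ?_⟩
  funext k
  show c (e k) = g k
  rw [hc, ← Finset.coe_orderIsoOfFin_apply, he]
  simp [OrderIso.apply_symm_apply]

lemma main_expansion {R : Type*} [Ring R] [Algebra ℂ R] {n t : ℕ}
    (q : Fin n → Fin n → ℂ) (hq0 : ∀ i j, q i j ≠ 0)
    (a : Fin n → Fin n → R) (x : Fin n → R)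
    (hx1 : ∀ i, x i * x i = 0)
    (hx2 : ∀ i j : Fin n, i < j → x j * x i = -(q i j) • (x i * x j))
    (hax : ∀ i j k, Commute (a i j) (x k))
    (row : Fin t → Fin n) :
    ordProd (fun k => ∑ j, a (row k) j * x j) =
      ∑ col ∈ Finset.univ.filter (fun col : Fin t → Fin n => StrictMono col),
        qMinor q row col a * ordProd (fun k => x (col k)) := by
  rw [ordProd_sum]
  have hsplit : ∀ g : Fin t → Fin n, ordProd (fun k => a (row k) (g k) * x (g k))
      = ordProd (fun k => a (row k) (g k)) * ordProd (x ∘ g) :=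
    fun g => ordProd_mul_split _ _ (fun k l => (hax (row l) (g l) (g k)).symm)
  set F : (Fin t → Fin n) → R :=
    fun g => ordProd (fun k => a (row k) (g k)) * ordProd (x ∘ g) with hF
  have step1 : ∑ g : Fin t → Fin n, ordProd (fun k => a (row k) (g k) * x (g k))
      = ∑ g : Fin t → Fin n, F g := Finset.sum_congr rfl (fun g _ => hsplit g)
  rw [step1]
  have step2 : ∑ g : Fin t → Fin n, F g
      = ∑ g ∈ Finset.univ.filter (fun g : Fin t → Fin n => Function.Injective g), F g := by
    rw [← Finset.sum_filter_add_sum_filter_not Finset.univ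
      (fun g : Fin t → Fin n => Function.Injective g) F]
    have : ∑ g ∈ Finset.univ.filter
        (fun g : Fin t → Fin n => ¬ Function.Injective g), F g = 0 := by
      apply Finset.sum_eq_zero
      intro g hgmem
      have hg : ¬ Function.Injective g := (Finset.mem_filter.1 hgmem).2
      rw [hF]
      simp only
      rw [xprod_eq_zero q x hx1 hx2 hq0 g hg, mul_zero]
    rw [this, add_zero]
  rw [step2]
  -- the bijection between injective maps and pairs (strictly monotone, permutation)
  have step3 : ∑ p ∈ (Finset.univ.filter (fun c : Fin t → Fin n => StrictMono c)) ×ˢ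
        (Finset.univ : Finset (Equiv.Perm (Fin t))),
        (qSign q p.1 p.2 • ordProd (fun k => a (row k) (p.1 (p.2 k)))) * ordProd (x ∘ p.1)
      = ∑ g ∈ Finset.univ.filter (fun g : Fin t → Fin n => Function.Injective g), F g := by
    apply Finset.sum_bij (fun (p : (Fin t → Fin n) × Equiv.Perm (Fin t)) _ => p.1 ∘ ⇑p.2)
    · rintro ⟨c, σ⟩ hp
      have hc : StrictMono c := (Finset.mem_filter.1 (Finset.mem_product.1 hp).1).2
      exact Finset.mem_filter.2 ⟨Finset.mem_univ _, hc.injective.comp σ.injective⟩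
    · rintro ⟨c, σ⟩ hp ⟨c', σ'⟩ hp' heq
      have hc : StrictMono c := (Finset.mem_filter.1 (Finset.mem_product.1 hp).1).2
      have hc' : StrictMono c' := (Finset.mem_filter.1 (Finset.mem_product.1 hp').1).2
      have hrange : Set.range c = Set.range c' := by
        have h1 : Set.range (c ∘ ⇑σ) = Set.range c :=
          Function.Surjective.range_comp σ.surjective c
        have h2 : Set.range (c' ∘ ⇑σ') = Set.range c' :=
          Function.Surjective.range_comp σ'.surjective c'
        rw [← h1, ← h2, heq]
      have hcc : c = c' := (hc.range_inj hc').1 hrange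
      subst hcc
      have hσσ : σ = σ' := by
        apply Equiv.ext
        intro k
        apply hc.injective
        exact congrFun heq k
      rw [hσσ]
    · intro g hg
      obtain ⟨c, σ, hmono, hfac⟩ :=
        injective_factor g (Finset.mem_filter.1 hg).2
      exact ⟨(c, σ), Finset.mem_product.2
        ⟨Finset.mem_filter.2 ⟨Finset.mem_univ _, hmono⟩, Finset.mem_univ _⟩, hfac⟩
    · rintro ⟨c, σ⟩ hp
      have hc : StrictMono c := (Finset.mem_filter.1 (Finset.mem_product.1 hp).1).2
      rw [hF]
      simp only
      rw [show x ∘ (c ∘ ⇑σ) = x ∘ c ∘ ⇑σ from rfl,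
        xprod_perm q x hx2 c hc σ, mul_smul_comm, smul_mul_assoc]
      rfl
  rw [← step3, Finset.sum_product]
  apply Finset.sum_congr rfl
  intro c _
  rw [qMinor, Finset.sum_mul]
  rfl

/-- `δ_{i_1} ⋯ δ_{i_t} = Σ_{j_1 < ⋯ < j_t} det_q(A^{i_1…i_t}_{j_1…j_t})
x_{j_1} ⋯ x_{j_t}`. -/
theorem delta_prod_minor_expansion {R : Type*} [Ring R] [Algebra ℂ R]
    {n : ℕ} (lam : ℂ)
    (p q : Fin n → Fin n → ℂ) (hpq : ParamConds p q) (hpl : PLambdaCond p q lam)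
    (a : Fin n → Fin n → R) (ha : IsQuantumMatrix p q a)
    (x : Fin n → R) (hx : QExterior q x)
    (hax : ∀ i j k, Commute (a i j) (x k))
    (δ : Fin n → R) (hδ : ∀ i, δ i = ∑ j, a i j * x j)
    (t : ℕ) (row : Fin t → Fin n) :
    ordProd (fun k => δ (row k)) =
      ∑ col ∈ Finset.univ.filter (fun col : Fin t → Fin n => StrictMono col),
        qMinor q row col a * ordProd (fun k => x (col k)) := by
  have hq0 : ∀ i j, q i j ≠ 0 := fun i j => (hpq.1 i j).2
  have h1 : (fun k => δ (row k)) = fun k => ∑ j, a (row k) j * x j :=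
    funext fun k => hδ (row k)
  rw [h1]
  exact main_expansion q hq0 a x hx.1 hx.2 hax row
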